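/- Let N ≥ 3 and λ = λ* := ((N-2)/2)². For the radial function G_γ(r) = (sin r)^{-(N-2)/2} (-ln sin r)^γ with 0 < γ < 1, defined for π/2 < r < π, one has G_γ'' (r) + (N-1) cot(r) G_γ'(r) + (λ*/sin² r) G_γ(r) = -(sin r)^{-(N-2)/2 - 2} [ γ(1-γ)(-ln sin r)^{γ-2} + E(r) ], where E(r)/(-ln sin r)^{γ-2} → 0 as r → π⁻; in particular -ΔG_γ - (λ*/sin²r)G_γ ~ γ(1-γ)(sin r)^{-(N-2)/2-2} (-ln sin r)^{γ-2} as r → π⁻, which is eventually positive. -/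

import Mathlib

open Real Filter

noncomputable def cbL (r : ℝ) : ℝ := -Real.log (Real.sin r)

noncomputable def cbF (α γ r : ℝ) : ℝ :=
  -Real.cos r * Real.sin r ^ (-α - 1) * (α * cbL r ^ γ + γ * cbL r ^ (γ - 1))

noncomputable def cbF2 (α γ r : ℝ) : ℝ :=
  Real.sin r ^ (-α - 2) *
    (Real.sin r ^ 2 * (α * cbL r ^ γ + γ * cbL r ^ (γ - 1))
      + (α + 1) * Real.cos r ^ 2 * (α * cbL r ^ γ + γ * cbL r ^ (γ - 1))
      + Real.cos r ^ 2 * (α * γ * cbL r ^ (γ - 1) + γ * (γ - 1) * cbL r ^ (γ - 2)))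

noncomputable def cbE (α γ r : ℝ) : ℝ :=
  -Real.sin r ^ 2 *
    ((α + α ^ 2) * cbL r ^ γ + γ * cbL r ^ (γ - 1) + γ * (1 - γ) * cbL r ^ (γ - 2))

lemma cb_rpow_split1 {x : ℝ} (hx : 0 < x) {a b : ℝ} (h : a = b + 1) :
    x ^ a = x ^ b * x := by
  subst h; rw [Real.rpow_add hx, Real.rpow_one]

lemma cb_rpow_split2 {x : ℝ} (hx : 0 < x) {a b : ℝ} (h : a = b + 2) :
    x ^ a = x ^ b * x ^ 2 := by
  subst h; rw [Real.rpow_add hx, Real.rpow_two]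

lemma cbL_pos {r : ℝ} (hs : 0 < Real.sin r) (hs1 : Real.sin r < 1) : 0 < cbL r := by
  have := Real.log_neg hs hs1
  simp only [cbL]; linarith

lemma cb_hasDerivAt (α γ : ℝ) {r : ℝ} (hs : 0 < Real.sin r) (hs1 : Real.sin r < 1) :
    HasDerivAt (fun s : ℝ => Real.sin s ^ (-α) * (-Real.log (Real.sin s)) ^ γ)
      (cbF α γ r) r := by
  have hL : 0 < cbL r := cbL_pos hs hs1
  have h1 : HasDerivAt (fun s : ℝ => Real.sin s ^ (-α))
      (Real.cos r * (-α) * Real.sin r ^ (-α - 1)) r :=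
    (Real.hasDerivAt_sin r).rpow_const (Or.inl hs.ne')
  have hlog : HasDerivAt (fun s : ℝ => -Real.log (Real.sin s)) (-(Real.cos r / Real.sin r)) r :=
    ((Real.hasDerivAt_sin r).log hs.ne').neg
  have h2 : HasDerivAt (fun s : ℝ => (-Real.log (Real.sin s)) ^ γ)
      (-(Real.cos r / Real.sin r) * γ * (-Real.log (Real.sin r)) ^ (γ - 1)) r :=
    hlog.rpow_const (Or.inl (by simpa [cbL] using hL.ne'))
  have h : HasDerivAt (fun s : ℝ => Real.sin s ^ (-α) * (-Real.log (Real.sin s)) ^ γ) _ r :=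
    h1.mul h2
  convert h using 1
  have hB : Real.sin r ^ (-α - 1) = Real.sin r ^ (-α) / Real.sin r :=
    Real.rpow_sub_one hs.ne' _
  simp only [cbF, cbL, hB]
  field_simp
  ring

lemma cbF_hasDerivAt (α γ : ℝ) {r : ℝ} (hs : 0 < Real.sin r) (hs1 : Real.sin r < 1) :
    HasDerivAt (cbF α γ) (cbF2 α γ r) r := by
  have hL : 0 < cbL r := cbL_pos hs hs1
  have hLne : -Real.log (Real.sin r) ≠ 0 := by simpa [cbL] using hL.ne'
  have hlog : HasDerivAt (fun s : ℝ => -Real.log (Real.sin s)) (-(Real.cos r / Real.sin r)) r :=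
    ((Real.hasDerivAt_sin r).log hs.ne').neg
  have hPa : HasDerivAt (fun s : ℝ => α * (-Real.log (Real.sin s)) ^ γ)
      (α * (-(Real.cos r / Real.sin r) * γ * (-Real.log (Real.sin r)) ^ (γ - 1))) r :=
    (hlog.rpow_const (Or.inl hLne)).const_mul α
  have hPb : HasDerivAt (fun s : ℝ => γ * (-Real.log (Real.sin s)) ^ (γ - 1))
      (γ * (-(Real.cos r / Real.sin r) * (γ - 1) * (-Real.log (Real.sin r)) ^ (γ - 1 - 1))) r :=
    (hlog.rpow_const (Or.inl hLne)).const_mul γ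
  have hP := hPa.add hPb
  have hB : HasDerivAt (fun s : ℝ => Real.sin s ^ (-α - 1))
      (Real.cos r * (-α - 1) * Real.sin r ^ (-α - 1 - 1)) r :=
    (Real.hasDerivAt_sin r).rpow_const (Or.inl hs.ne')
  have hC : HasDerivAt (fun s : ℝ => -Real.cos s) (Real.sin r) r := by
    simpa using (Real.hasDerivAt_cos r).fun_neg
  have h : HasDerivAt (fun s : ℝ => -Real.cos s * Real.sin s ^ (-α - 1) *
        (α * (-Real.log (Real.sin s)) ^ γ + γ * (-Real.log (Real.sin s)) ^ (γ - 1))) _ r :=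
    (hC.mul hB : HasDerivAt (fun s : ℝ => -Real.cos s * Real.sin s ^ (-α - 1)) _ r).mul hP
  have hfun : cbF α γ = fun s =>
      -Real.cos s * Real.sin s ^ (-α - 1) *
        (α * (-Real.log (Real.sin s)) ^ γ + γ * (-Real.log (Real.sin s)) ^ (γ - 1)) := by
    funext s; simp [cbF, cbL]
  rw [hfun]
  convert h using 1
  have e1 : (-α - 1 - 1 : ℝ) = -α - 2 := by ring
  have e2 : (γ - 1 - 1 : ℝ) = γ - 2 := by ring
  have e3 : Real.sin r ^ (-α - 1) = Real.sin r ^ (-α - 2) * Real.sin r := by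
    exact cb_rpow_split1 hs (by ring)

  simp only [cbF2, cbL, e1, e2, e3, Pi.mul_apply]
  field_simp
  ring

lemma cb_key (α γ : ℝ) {r : ℝ} (hs : 0 < Real.sin r) (hs1 : Real.sin r < 1) :
    cbF2 α γ r + (2 * α + 1) * (Real.cos r / Real.sin r) * cbF α γ r
      + (α ^ 2 / Real.sin r ^ 2) * (Real.sin r ^ (-α) * (-Real.log (Real.sin r)) ^ γ)
    = -(Real.sin r ^ (-α - 2)) * (γ * (1 - γ) * (-Real.log (Real.sin r)) ^ (γ - 2) + cbE α γ r) := by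
  have hL : 0 < cbL r := cbL_pos hs hs1
  have h1 : Real.sin r ^ (-α : ℝ) = Real.sin r ^ (-α - 2) * Real.sin r ^ 2 := by
    exact cb_rpow_split2 hs (by ring)
  have h2 : Real.sin r ^ (-α - 1 : ℝ) = Real.sin r ^ (-α - 2) * Real.sin r := by
    exact cb_rpow_split1 hs (by ring)

  have h3 : cbL r ^ γ = cbL r ^ (γ - 2) * cbL r ^ 2 := by
    exact cb_rpow_split2 hL (by ring)
  have h4 : cbL r ^ (γ - 1) = cbL r ^ (γ - 2) * cbL r := by
    exact cb_rpow_split1 hL (by ring)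
  have hmid : (2 * α + 1) * (Real.cos r / Real.sin r) * cbF α γ r
      = -(2 * α + 1) * Real.cos r ^ 2 * (Real.sin r ^ (-α - 2)) *
          (α * cbL r ^ γ + γ * cbL r ^ (γ - 1)) := by
    simp only [cbF, h2]
    field_simp
  have hlast : (α ^ 2 / Real.sin r ^ 2) * (Real.sin r ^ (-α) * (-Real.log (Real.sin r)) ^ γ)
      = α ^ 2 * (Real.sin r ^ (-α - 2)) * cbL r ^ γ := by
    rw [show (-Real.log (Real.sin r)) = cbL r from rfl, h1]
    field_simp
  rw [hmid, hlast]
  simp only [cbF2, cbE, h3, h4, Real.cos_sq']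
  rw [show (-Real.log (Real.sin r)) = cbL r from rfl]
  ring

/-- asymptotic expansion of the critical-Hardy operator applied to
G_γ(r) = (sin r)^{-(N-2)/2} (-ln sin r)^γ near r = π. -/
theorem critical_barrier_asymptotics (N : ℕ) (hN : 3 ≤ N) (γ : ℝ)
    (hγ0 : 0 < γ) (hγ1 : γ < 1) :
    ∃ E : ℝ → ℝ,
      (∀ r ∈ Set.Ioo (π / 2) π,
        deriv (deriv (fun s : ℝ =>
            Real.sin s ^ (-(((N : ℝ) - 2) / 2)) * (-Real.log (Real.sin s)) ^ γ)) r
          + ((N : ℝ) - 1) * (Real.cos r / Real.sin r)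
            * deriv (fun s : ℝ =>
                Real.sin s ^ (-(((N : ℝ) - 2) / 2)) * (-Real.log (Real.sin s)) ^ γ) r
          + ((((N : ℝ) - 2) / 2) ^ 2 / Real.sin r ^ 2)
            * (Real.sin r ^ (-(((N : ℝ) - 2) / 2)) * (-Real.log (Real.sin r)) ^ γ)
        = -(Real.sin r ^ (-(((N : ℝ) - 2) / 2) - 2))
            * (γ * (1 - γ) * (-Real.log (Real.sin r)) ^ (γ - 2) + E r)) ∧
      Tendsto (fun r => E r / (-Real.log (Real.sin r)) ^ (γ - 2))
        (nhdsWithin π (Set.Iio π)) (nhds 0) ∧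
      Tendsto (fun r =>
          -(deriv (deriv (fun s : ℝ =>
              Real.sin s ^ (-(((N : ℝ) - 2) / 2)) * (-Real.log (Real.sin s)) ^ γ)) r
            + ((N : ℝ) - 1) * (Real.cos r / Real.sin r)
              * deriv (fun s : ℝ =>
                  Real.sin s ^ (-(((N : ℝ) - 2) / 2)) * (-Real.log (Real.sin s)) ^ γ) r
            + ((((N : ℝ) - 2) / 2) ^ 2 / Real.sin r ^ 2)
              * (Real.sin r ^ (-(((N : ℝ) - 2) / 2)) * (-Real.log (Real.sin r)) ^ γ))
          / (γ * (1 - γ) * Real.sin r ^ (-(((N : ℝ) - 2) / 2) - 2)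
              * (-Real.log (Real.sin r)) ^ (γ - 2)))
        (nhdsWithin π (Set.Iio π)) (nhds 1) ∧
      (∀ᶠ r in nhdsWithin π (Set.Iio π),
        0 < -(deriv (deriv (fun s : ℝ =>
              Real.sin s ^ (-(((N : ℝ) - 2) / 2)) * (-Real.log (Real.sin s)) ^ γ)) r
            + ((N : ℝ) - 1) * (Real.cos r / Real.sin r)
              * deriv (fun s : ℝ =>
                  Real.sin s ^ (-(((N : ℝ) - 2) / 2)) * (-Real.log (Real.sin s)) ^ γ) r
            + ((((N : ℝ) - 2) / 2) ^ 2 / Real.sin r ^ 2)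
              * (Real.sin r ^ (-(((N : ℝ) - 2) / 2)) * (-Real.log (Real.sin r)) ^ γ))) := by
  set α : ℝ := ((N : ℝ) - 2) / 2 with hα
  -- basic facts on Ioo (π/2, π)
  have hsin_pos : ∀ r ∈ Set.Ioo (π / 2) π, 0 < Real.sin r := by
    intro r hr
    exact Real.sin_pos_of_pos_of_lt_pi (lt_trans (by positivity) hr.1) hr.2
  have hsin_lt_one : ∀ r ∈ Set.Ioo (π / 2) π, Real.sin r < 1 := by
    intro r hr
    have h := Real.sin_lt_sin_of_lt_of_le_pi_div_two (x := π - r) (y := π / 2)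
      (by linarith [Real.pi_pos, hr.2]) le_rfl (by linarith [hr.1])
    rwa [Real.sin_pi_sub, Real.sin_pi_div_two] at h
  -- derivative identifications
  have hderiv1 : ∀ r ∈ Set.Ioo (π / 2) π,
      deriv (fun s : ℝ => Real.sin s ^ (-α) * (-Real.log (Real.sin s)) ^ γ) r = cbF α γ r :=
    fun r hr => (cb_hasDerivAt α γ (hsin_pos r hr) (hsin_lt_one r hr)).deriv
  have hderiv2 : ∀ r ∈ Set.Ioo (π / 2) π,
      deriv (deriv (fun s : ℝ => Real.sin s ^ (-α) * (-Real.log (Real.sin s)) ^ γ)) r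
        = cbF2 α γ r := by
    intro r hr
    have hev : deriv (fun s : ℝ => Real.sin s ^ (-α) * (-Real.log (Real.sin s)) ^ γ)
        =ᶠ[nhds r] cbF α γ := by
      filter_upwards [isOpen_Ioo.mem_nhds hr] with x hx
      exact hderiv1 x hx
    rw [hev.deriv_eq]
    exact (cbF_hasDerivAt α γ (hsin_pos r hr) (hsin_lt_one r hr)).deriv
  have hN1 : (N : ℝ) - 1 = 2 * α + 1 := by
    rw [hα]; ring
  -- main pointwise identity
  have hId : ∀ r ∈ Set.Ioo (π / 2) π,
      deriv (deriv (fun s : ℝ => Real.sin s ^ (-α) * (-Real.log (Real.sin s)) ^ γ)) r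
        + ((N : ℝ) - 1) * (Real.cos r / Real.sin r)
          * deriv (fun s : ℝ => Real.sin s ^ (-α) * (-Real.log (Real.sin s)) ^ γ) r
        + (α ^ 2 / Real.sin r ^ 2) * (Real.sin r ^ (-α) * (-Real.log (Real.sin r)) ^ γ)
      = -(Real.sin r ^ (-α - 2))
          * (γ * (1 - γ) * (-Real.log (Real.sin r)) ^ (γ - 2) + cbE α γ r) := by
    intro r hr
    rw [hderiv1 r hr, hderiv2 r hr, hN1]
    exact cb_key α γ (hsin_pos r hr) (hsin_lt_one r hr)
  -- membership eventually
  have hmem : ∀ᶠ r in nhdsWithin π (Set.Iio π), r ∈ Set.Ioo (π / 2) π :=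
    Ioo_mem_nhdsLT_of_mem ⟨by linarith [Real.pi_pos], le_refl π⟩
  -- sin tends to 0 from the right
  have hsin0 : Tendsto (fun r => Real.sin r) (nhdsWithin π (Set.Iio π)) (nhds 0) := by
    have := (Real.continuous_sin.tendsto π).mono_left (nhdsWithin_le_nhds (s := Set.Iio π))
    simpa using this
  have hsinr : Tendsto (fun r => Real.sin r) (nhdsWithin π (Set.Iio π)) (nhdsWithin 0 (Set.Ioi 0)) := by
    rw [tendsto_nhdsWithin_iff]
    exact ⟨hsin0, hmem.mono fun r hr => hsin_pos r hr⟩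
  have hxlog : Tendsto (fun r => Real.log (Real.sin r) * Real.sin r)
      (nhdsWithin π (Set.Iio π)) (nhds 0) := by
    have h0 : Tendsto (fun x : ℝ => Real.log x * x) (nhdsWithin 0 (Set.Ioi 0)) (nhds 0) := by
      simpa using tendsto_log_mul_rpow_nhdsGT_zero (r := 1) zero_lt_one
    exact h0.comp hsinr
  -- Part 2 : E / L^(γ-2) → 0
  have hEdiv : Tendsto (fun r => cbE α γ r / (-Real.log (Real.sin r)) ^ (γ - 2))
      (nhdsWithin π (Set.Iio π)) (nhds 0) := by
    have hEq : ∀ᶠ r in nhdsWithin π (Set.Iio π),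
        -((α + α ^ 2) * ((Real.log (Real.sin r) * Real.sin r) * (Real.log (Real.sin r) * Real.sin r))
            - γ * (Real.sin r * (Real.log (Real.sin r) * Real.sin r))
            + γ * (1 - γ) * (Real.sin r * Real.sin r))
          = cbE α γ r / (-Real.log (Real.sin r)) ^ (γ - 2) := by
      filter_upwards [hmem] with r hr
      have hs := hsin_pos r hr
      have hs1 := hsin_lt_one r hr
      have hL : 0 < cbL r := cbL_pos hs hs1
      have hM : (0:ℝ) < cbL r ^ (γ - 2) := Real.rpow_pos_of_pos hL _
      have h3 : cbL r ^ γ = cbL r ^ (γ - 2) * cbL r ^ 2 := cb_rpow_split2 hL (by ring)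
      have h4 : cbL r ^ (γ - 1) = cbL r ^ (γ - 2) * cbL r := cb_rpow_split1 hL (by ring)
      rw [show (-Real.log (Real.sin r)) = cbL r from rfl, eq_div_iff hM.ne']
      simp only [cbE, h3, h4]
      have : cbL r = -Real.log (Real.sin r) := rfl
      rw [this]
      ring
    refine Tendsto.congr' hEq ?_
    have h1 := hxlog.mul hxlog
    have h2 := hsin0.mul hxlog
    have h3 := hsin0.mul hsin0
    have := (((h1.const_mul (α + α ^ 2)).sub (h2.const_mul γ)).add
      (h3.const_mul (γ * (1 - γ)))).neg
    simpa using this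
  have hratio : Tendsto (fun r =>
      -(deriv (deriv (fun s : ℝ => Real.sin s ^ (-α) * (-Real.log (Real.sin s)) ^ γ)) r
          + ((N : ℝ) - 1) * (Real.cos r / Real.sin r)
            * deriv (fun s : ℝ => Real.sin s ^ (-α) * (-Real.log (Real.sin s)) ^ γ) r
          + (α ^ 2 / Real.sin r ^ 2) * (Real.sin r ^ (-α) * (-Real.log (Real.sin r)) ^ γ))
        / (γ * (1 - γ) * Real.sin r ^ (-α - 2) * (-Real.log (Real.sin r)) ^ (γ - 2)))
      (nhdsWithin π (Set.Iio π)) (nhds 1) := by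
    have hEq : ∀ᶠ r in nhdsWithin π (Set.Iio π),
        1 + cbE α γ r / (-Real.log (Real.sin r)) ^ (γ - 2) * (γ * (1 - γ))⁻¹
          = -(deriv (deriv (fun s : ℝ => Real.sin s ^ (-α) * (-Real.log (Real.sin s)) ^ γ)) r
              + ((N : ℝ) - 1) * (Real.cos r / Real.sin r)
                * deriv (fun s : ℝ => Real.sin s ^ (-α) * (-Real.log (Real.sin s)) ^ γ) r
              + (α ^ 2 / Real.sin r ^ 2) * (Real.sin r ^ (-α) * (-Real.log (Real.sin r)) ^ γ))
            / (γ * (1 - γ) * Real.sin r ^ (-α - 2) * (-Real.log (Real.sin r)) ^ (γ - 2)) := by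
      filter_upwards [hmem] with r hr
      have hs := hsin_pos r hr
      have hs1 := hsin_lt_one r hr
      have hL : 0 < cbL r := cbL_pos hs hs1
      have hM : (0:ℝ) < (-Real.log (Real.sin r)) ^ (γ - 2) := Real.rpow_pos_of_pos hL _
      have hA : (0:ℝ) < Real.sin r ^ (-α - 2 : ℝ) := Real.rpow_pos_of_pos hs _
      rw [hId r hr]
      have hγγ : (0:ℝ) < γ * (1 - γ) := mul_pos hγ0 (by linarith)
      have hγ : γ * (1 - γ) ≠ 0 := hγγ.ne'
      have h1γ : (1 - γ) ≠ 0 := (by linarith : (0:ℝ) < 1 - γ).ne'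
      field_simp
    have hlim : Tendsto (fun r =>
        1 + cbE α γ r / (-Real.log (Real.sin r)) ^ (γ - 2) * (γ * (1 - γ))⁻¹)
        (nhdsWithin π (Set.Iio π)) (nhds 1) := by
      have := (hEdiv.mul_const (γ * (1 - γ))⁻¹).const_add 1
      simpa using this
    exact Tendsto.congr' hEq hlim
  -- choose E
  refine ⟨cbE α γ, fun r hr => hId r hr, hEdiv, hratio, ?_⟩
  · -- eventual positivity
    have hEq2 : ∀ᶠ r in nhdsWithin π (Set.Iio π),
        (1:ℝ)/2 < -(deriv (deriv (fun s : ℝ => Real.sin s ^ (-α) * (-Real.log (Real.sin s)) ^ γ)) r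
              + ((N : ℝ) - 1) * (Real.cos r / Real.sin r)
                * deriv (fun s : ℝ => Real.sin s ^ (-α) * (-Real.log (Real.sin s)) ^ γ) r
              + (α ^ 2 / Real.sin r ^ 2) * (Real.sin r ^ (-α) * (-Real.log (Real.sin r)) ^ γ))
            / (γ * (1 - γ) * Real.sin r ^ (-α - 2) * (-Real.log (Real.sin r)) ^ (γ - 2)) := by
      exact hratio.eventually (lt_mem_nhds (by norm_num : (1:ℝ)/2 < 1))
    filter_upwards [hEq2, hmem] with r hrat hr
    have hs := hsin_pos r hr
    have hs1 := hsin_lt_one r hr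
    have hL : 0 < cbL r := cbL_pos hs hs1
    have hM : (0:ℝ) < (-Real.log (Real.sin r)) ^ (γ - 2) := Real.rpow_pos_of_pos hL _
    have hA : (0:ℝ) < Real.sin r ^ (-α - 2 : ℝ) := Real.rpow_pos_of_pos hs _
    have hden : (0:ℝ) < γ * (1 - γ) * Real.sin r ^ (-α - 2 : ℝ)
        * (-Real.log (Real.sin r)) ^ (γ - 2) :=
      mul_pos (mul_pos (mul_pos hγ0 (by linarith)) hA) hM
    have hpos : (0:ℝ) < -(deriv (deriv (fun s : ℝ => Real.sin s ^ (-α) * (-Real.log (Real.sin s)) ^ γ)) r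
              + ((N : ℝ) - 1) * (Real.cos r / Real.sin r)
                * deriv (fun s : ℝ => Real.sin s ^ (-α) * (-Real.log (Real.sin s)) ^ γ) r
              + (α ^ 2 / Real.sin r ^ 2) * (Real.sin r ^ (-α) * (-Real.log (Real.sin r)) ^ γ))
            / (γ * (1 - γ) * Real.sin r ^ (-α - 2) * (-Real.log (Real.sin r)) ^ (γ - 2)) :=
      lt_trans (by norm_num) hrat
    rcases (div_pos_iff.mp hpos) with ⟨hnum, _⟩ | ⟨_, hdneg⟩
    · linarith
    · linarith
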